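/- Let K ≥ 1 be an integer and let x : [0,∞) → ℝ be differentiable with x'(t) = −x(t)·(x(t) − 1)^{2K+1} for all t ≥ 0, and suppose 1 < x(t) ≤ 2 for all t ≥ 0. Then for every t ≥ 0, x(t) − 1 ≥ ((x(0) − 1)^{−2K} + 4K·t)^{−1/(2K)}. In particular, x(t) converges to the stationary point 1 no faster than the algebraic rate t^{−1/(2K)}. -/

import Mathlib

/-- Arbitrarily slow algebraic convergence of the covariance of Gaussian
approximate gradient flows for a suitable non-logconcave target: if
`x' = −x (x − 1)^{2K+1}` with `1 < x(t) ≤ 2` for all `t ≥ 0`, then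
`x(t) − 1 ≥ ((x(0) − 1)^{−2K} + 4Kt)^{−1/(2K)}` for every `t ≥ 0`. -/
theorem gaussian_flow_slow_convergence_lower_bound
    (K : ℕ) (hK : 1 ≤ K)
    (x : ℝ → ℝ)
    (hderiv : ∀ t : ℝ, 0 ≤ t →
      HasDerivAt x (-x t * (x t - 1) ^ (2 * K + 1)) t)
    (hbound : ∀ t : ℝ, 0 ≤ t → 1 < x t ∧ x t ≤ 2) :
    ∀ t : ℝ, 0 ≤ t →
      ((x 0 - 1) ^ (-(2 * (K : ℝ))) + 4 * (K : ℝ) * t) ^ (-(1 / (2 * (K : ℝ)))) ≤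
        x t - 1 := by
  intro t ht
  set u : ℝ → ℝ := fun s => x s - 1 with hu
  have hupos : ∀ s, 0 ≤ s → 0 < u s := by
    intro s hs
    have := (hbound s hs).1
    simp only [hu]
    linarith
  set y : ℝ → ℝ := fun s => u s ^ (-(2 * K : ℤ)) with hy
  have hKpos : (0:ℝ) < K := by exact_mod_cast hK
  -- derivative of g s = y s - 4 K s
  set g : ℝ → ℝ := fun s => y s - 4 * K * s with hg
  have hgderiv : ∀ s, 0 ≤ s → HasDerivAt g (2 * K * x s - 4 * K) s := by
    intro s hs
    have hx := hderiv s hs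
    have hu0 : u s ≠ 0 := (hupos s hs).ne'
    have hu' : HasDerivAt u (-x s * u s ^ (2 * K + 1)) s := hx.sub_const 1
    have h := (hasDerivAt_zpow (-(2 * K : ℤ)) (u s) (Or.inl hu0)).comp s hu'
    have hy' : HasDerivAt y (2 * K * x s) s := by
      refine h.congr_deriv ?_
      symm
      have hprod : u s ^ (-(2 * K : ℤ) - 1) * u s ^ ((2 * K + 1 : ℕ) : ℤ) = 1 := by
        rw [← zpow_add₀ hu0]; norm_num
      have hpow : u s ^ (2 * K + 1) = u s ^ ((2 * K + 1 : ℕ) : ℤ) := (zpow_natCast _ _).symm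
      rw [hpow]
      push_cast at hprod ⊢
      linear_combination (-(2 * (K:ℝ) * x s)) * hprod
    exact (hy'.sub ((hasDerivAt_id s).const_mul (4 * (K:ℝ)))).congr_deriv (by ring)
  -- g is antitone on Ici 0
  have hg_anti : AntitoneOn g (Set.Ici (0:ℝ)) := by
    apply antitoneOn_of_deriv_nonpos (convex_Ici 0)
    · intro s hs
      exact (hgderiv s hs).continuousAt.continuousWithinAt
    · intro s hs
      rw [interior_Ici] at hs
      exact (hgderiv s (le_of_lt hs)).differentiableAt.differentiableWithinAt
    · intro s hs
      rw [interior_Ici] at hs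
      rw [(hgderiv s (le_of_lt hs)).deriv]
      have := (hbound s (le_of_lt hs)).2
      nlinarith
  have hybound : y t ≤ y 0 + 4 * K * t := by
    have := hg_anti (Set.self_mem_Ici) (Set.mem_Ici.mpr ht) ht
    simp only [hg] at this
    linarith
  -- positivity
  have hut : 0 < u t := hupos t ht
  have hyt_pos : 0 < y t := zpow_pos hut _
  have hyt : y t = u t ^ (-(2 * (K:ℝ))) := by
    show u t ^ (-(2 * K : ℤ)) = _
    rw [← Real.rpow_intCast (u t) (-(2 * K : ℤ))]
    norm_num
  have hA : (x 0 - 1) ^ (-(2 * (K : ℝ))) + 4 * (K:ℝ) * t = y 0 + 4 * K * t := by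
    have : (x 0 - 1) ^ (-(2 * (K : ℝ))) = y 0 := by
      show _ = u 0 ^ (-(2 * K : ℤ))
      rw [← Real.rpow_intCast (u 0) (-(2 * K : ℤ))]
      norm_num
      rfl
    rw [this]
  rw [hA]
  have hApos : 0 < y 0 + 4 * K * t := lt_of_lt_of_le hyt_pos hybound
  have hle : (y 0 + 4 * K * t) ^ (-(1 / (2 * (K:ℝ)))) ≤ (y t) ^ (-(1 / (2 * (K:ℝ)))) := by
    apply Real.rpow_le_rpow_of_nonpos hyt_pos hybound
    have : 0 < 1 / (2 * (K:ℝ)) := by positivity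
    linarith
  refine hle.trans_eq ?_
  rw [hyt, ← Real.rpow_mul hut.le]
  have hexp : (-(2 * (K:ℝ))) * (-(1 / (2 * (K:ℝ)))) = 1 := by
    field_simp
  rw [hexp, Real.rpow_one]
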